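/- Carlet's generalized Gray map is an isometry in the following sense: let r ≥ 2 and let x ∈ Z/2^rZ have binary expansion x̄ = x₁ + 2x₂ + ⋯ + 2^{r−1}x_r with x₁, …, x_r ∈ {0,1}. Then the number of points y = (y₁, …, y_{r−1}) ∈ F2^{r−1} at which the Boolean function f_x(y) = x_r + x₁y₁ + ⋯ + x_{r−1}y_{r−1} takes the value 1 (i.e., the Hamming weight of the image of x under the generalized Gray map) equals 0 if x = 0, equals 2^{r−1} if x = 2^{r−1}, and equals 2^{r−2} otherwise; that is, it equals the homogeneous weight of x on Z/2^rZ with average value Γ = 2^{r−2}. -/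

import Mathlib

/-- The `i`-th bit (zero-indexed) of the binary expansion of the canonical
representative of `x ∈ Z/2^rZ`, viewed in `F₂`.  With the paper's one-indexed
notation `x̄ = x₁ + 2x₂ + ⋯ + 2^{r-1}x_r`, we have `x_i = bit x (i - 1)`. -/
def bit {r : ℕ} (x : ZMod (2 ^ r)) (i : ℕ) : ZMod 2 := ((x.val / 2 ^ i) % 2 : ℕ)

lemma lt_two_cases (n : ℕ) (h : n < 2) : n = 0 ∨ n = 1 := by omega

lemma pow_two_split (n : ℕ) (hn : 1 ≤ n) : 2 ^ n = 2 * 2 ^ (n - 1) := by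
  rw [← pow_succ']
  congr 1
  omega

lemma zmod2_cases (z : ZMod 2) : z = 0 ∨ z = 1 := by revert z; decide

lemma lowbits_zero (v : ℕ) : ∀ m : ℕ, (∀ i < m, v / 2 ^ i % 2 = 0) → v % 2 ^ m = 0 := by
  intro m
  induction m with
  | zero => intro _; exact Nat.mod_one v
  | succ m ih =>
    intro h
    have h1 : v % 2 ^ m = 0 := ih fun i hi => h i (by omega)
    have h2 : v / 2 ^ m % 2 = 0 := h m (by omega)
    calc v % 2 ^ (m + 1) = v % (2 ^ m * 2) := by ring_nf
      _ = v % 2 ^ m + 2 ^ m * (v / 2 ^ m % 2) := Nat.mod_mul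
      _ = 0 := by rw [h1, h2]; ring

/-- Counting lemma: a non-constant affine Boolean function takes the value 1
at exactly half of the points. -/
lemma affine_count {n : ℕ} (a : Fin n → ZMod 2) (c : ZMod 2) (j : Fin n) (hj : a j = 1) :
    (Finset.univ.filter (fun y : Fin n → ZMod 2 => c + ∑ i, a i * y i = 1)).card
      = 2 ^ (n - 1) := by
  have hn : 1 ≤ n := j.pos
  have hz211 : ∀ z : ZMod 2, z + 1 + 1 = z := by decide
  have hflip : ∀ y : Fin n → ZMod 2,
      c + ∑ i, a i * Function.update y j (y j + 1) i = c + (∑ i, a i * y i) + 1 := by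
    intro y
    have : ∑ i, a i * Function.update y j (y j + 1) i
        = (∑ i, a i * y i) + 1 := by
      rw [Fintype.sum_eq_add_sum_compl j, Fintype.sum_eq_add_sum_compl j
        (fun i => a i * y i)]
      have hc : ∑ i ∈ {j}ᶜ, a i * Function.update y j (y j + 1) i
          = ∑ i ∈ {j}ᶜ, a i * y i := by
        refine Finset.sum_congr rfl fun i hi => ?_
        rw [Function.update_of_ne (by simpa using hi)]
      rw [hc, Function.update_self, hj]
      ring
    rw [this]; ring
  have hinv : ∀ y : Fin n → ZMod 2,
      Function.update (Function.update y j (y j + 1)) j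
        (Function.update y j (y j + 1) j + 1) = y := by
    intro y
    funext i
    rcases eq_or_ne i j with rfl | hij
    · simp [hz211]
    · simp [Function.update_of_ne hij]
  have hcards : (Finset.univ.filter (fun y : Fin n → ZMod 2 =>
        c + ∑ i, a i * y i = 1)).card
      = (Finset.univ.filter (fun y : Fin n → ZMod 2 =>
        ¬ (c + ∑ i, a i * y i = 1))).card := by
    apply Finset.card_nbij' (fun y => Function.update y j (y j + 1))
      (fun y => Function.update y j (y j + 1))
    · intro y hy
      simp only [Finset.mem_coe, Finset.mem_filter, Finset.mem_univ, true_and] at hy ⊢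
      rw [hflip y, hy]
      decide
    · intro y hy
      simp only [Finset.mem_coe, Finset.mem_filter, Finset.mem_univ, true_and] at hy ⊢
      rw [hflip y]
      rcases zmod2_cases (c + ∑ i, a i * y i) with h | h
      · rw [h]; decide
      · exact absurd h hy
    · intro y _; exact hinv y
    · intro y _; exact hinv y
  have htot : (Finset.univ.filter (fun y : Fin n → ZMod 2 =>
        c + ∑ i, a i * y i = 1)).card
      + (Finset.univ.filter (fun y : Fin n → ZMod 2 =>
        ¬ (c + ∑ i, a i * y i = 1))).card = 2 ^ n := by
    rw [Finset.card_filter_add_card_filter_not, Finset.card_univ]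
    simp
  have h2 : 2 ^ n = 2 * 2 ^ (n - 1) := pow_two_split n hn
  have key : 2 * (Finset.univ.filter (fun y : Fin n → ZMod 2 =>
      c + ∑ i, a i * y i = 1)).card = 2 ^ n := by
    rw [two_mul]
    nth_rewrite 2 [hcards]
    exact htot
  rw [h2] at key
  exact Nat.eq_of_mul_eq_mul_left two_pos key

/-- Carlet's generalized Gray map is an isometry: for `r ≥ 2` and `x ∈ Z/2^rZ` with
binary expansion `x̄ = x₁ + 2x₂ + ⋯ + 2^{r-1}x_r`, the number of points
`y ∈ F₂^{r-1}` where the Boolean function `f_x(y) = x_r + x₁y₁ + ⋯ + x_{r-1}y_{r-1}`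
takes the value `1` (the Hamming weight of the Gray image of `x`) equals `0` if
`x = 0`, equals `2^{r-1}` if `x = 2^{r-1}`, and equals `2^{r-2}` otherwise, i.e. it is
the homogeneous weight of `x` on `Z/2^rZ` with `Γ = 2^{r-2}`. -/
theorem gray_map_isometry (r : ℕ) (hr : 2 ≤ r) (x : ZMod (2 ^ r)) :
    (Finset.univ.filter (fun y : Fin (r - 1) → ZMod 2 =>
        bit x (r - 1) + ∑ i : Fin (r - 1), bit x i * y i = 1)).card =
      if x = 0 then 0
      else if x = (2 ^ (r - 1) : ZMod (2 ^ r)) then 2 ^ (r - 1)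
      else 2 ^ (r - 2) := by
  haveI : NeZero (2 ^ r) := ⟨by positivity⟩
  have hvlt : x.val < 2 ^ r := ZMod.val_lt x
  have hbit : ∀ i : ℕ, bit x i = ((x.val / 2 ^ i % 2 : ℕ) : ZMod 2) := fun i => rfl
  have hbit01 : ∀ i : ℕ, x.val / 2 ^ i % 2 = 0 ∨ x.val / 2 ^ i % 2 = 1 := by
    intro i; omega
  have hb_iff : ∀ i : ℕ, bit x i = 0 ↔ x.val / 2 ^ i % 2 = 0 := by
    intro i
    rw [hbit]
    rcases hbit01 i with h | h <;> rw [h] <;> simp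
  by_cases hlow : ∀ i < r - 1, x.val / 2 ^ i % 2 = 0
  · -- all low bits are zero: x = 0 or x = 2^(r-1)
    have hmod : x.val % 2 ^ (r - 1) = 0 := lowbits_zero x.val (r - 1) hlow
    have hval : x.val = 2 ^ (r - 1) * (x.val / 2 ^ (r - 1)) := by
      conv_lhs => rw [← Nat.div_add_mod x.val (2 ^ (r - 1))]
      rw [hmod, add_zero]
    have h2r : 2 ^ r = 2 ^ (r - 1) * 2 := by
      rw [← pow_succ]; congr 1; omega
    have hdlt : x.val / 2 ^ (r - 1) < 2 :=
      Nat.div_lt_of_lt_mul (by rw [← h2r]; exact hvlt)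
    have hsum0 : ∀ y : Fin (r - 1) → ZMod 2, ∑ i : Fin (r - 1), bit x i * y i = 0 := by
      intro y
      apply Finset.sum_eq_zero
      intro i _
      have : bit x i = 0 := (hb_iff i).mpr (hlow i i.isLt)
      rw [this, zero_mul]
    have hd01 := lt_two_cases _ hdlt
    rcases hd01 with hd | hd
    · -- x = 0
      have hv0 : x.val = 0 := by rw [hval, hd, mul_zero]
      have hx0 : x = 0 := by
        have h1 := ZMod.natCast_rightInverse (n := 2 ^ r) x
        rw [← h1, hv0]; simp
      rw [if_pos hx0]
      rw [Finset.card_eq_zero, Finset.filter_eq_empty_iff]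
      intro y _
      rw [hsum0 y, add_zero, (hb_iff (r - 1)).mpr (by omega)]
      decide
    · -- x = 2^(r-1)
      have hv : x.val = 2 ^ (r - 1) := by rw [hval, hd, mul_one]
      have hx : x = (2 ^ (r - 1) : ZMod (2 ^ r)) := by
        have h1 := ZMod.natCast_rightInverse (n := 2 ^ r) x
        rw [← h1, hv]
        push_cast
        ring
      have hx0 : x ≠ 0 := by
        intro h0
        rw [h0, ZMod.val_zero] at hv
        have : 0 < 2 ^ (r - 1) := by positivity
        omega
      rw [if_neg hx0, if_pos hx]
      have hbr : bit x (r - 1) = 1 := by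
        rw [hbit, hv, Nat.div_self (by positivity)]
        norm_num
      rw [Finset.filter_true_of_mem (fun y _ => by rw [hsum0 y, add_zero, hbr]),
        Finset.card_univ]
      simp
  · -- some low bit is nonzero
    push_neg at hlow
    obtain ⟨i, hi, hine⟩ := hlow
    have hbi : x.val / 2 ^ i % 2 = 1 := by
      rcases hbit01 i with h | h
      · exact absurd h hine
      · exact h
    have hbit1 : bit x i = 1 := by rw [hbit, hbi]; norm_num
    have hx0 : x ≠ 0 := by
      intro h0
      rw [h0, ZMod.val_zero] at hbi
      simp at hbi
    have hxp : x ≠ (2 ^ (r - 1) : ZMod (2 ^ r)) := by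
      intro hxe
      have hvp : x.val = 2 ^ (r - 1) := by
        rw [hxe]
        have h1 : (2 ^ (r - 1) : ZMod (2 ^ r)) = ((2 ^ (r - 1) : ℕ) : ZMod (2 ^ r)) := by
          push_cast; ring
        rw [h1, ZMod.val_cast_of_lt (Nat.pow_lt_pow_right one_lt_two (by omega))]
      rw [hvp, Nat.pow_div (by omega) (by norm_num)] at hbi
      have h2 : 2 ∣ 2 ^ (r - 1 - i) := dvd_pow_self 2 (by omega)
      omega
    rw [if_neg hx0, if_neg hxp]
    have hcount := affine_count (fun i : Fin (r - 1) => bit x i) (bit x (r - 1)) ⟨i, hi⟩ hbit1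
    have hrr : (2 : ℕ) ^ (r - 1 - 1) = 2 ^ (r - 2) := by
      rw [Nat.sub_sub]
    rw [← hrr]
    exact hcount
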